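/- Let T be an x-monotone terrain, h a height above T, f(h) the leftmost among the rightmost full-visibility placements F(e,h) over edges e of T. Then for any point u on L(h) with x(u) < x(f(h)), the set of points of T visible from u is a subset of the set of points of T visible from f(h). -/
import Mathlib


open Set

/-- An x-monotone polygonal terrain: vertices `x 0 < x 1 < ⋯ < x N` on the x-axis,
heights given by `f`, which is affine with slope `m i` and intercept `c i` on the
`i`-th edge. -/
structure Terrain where
  N : ℕ
  hN : 1 ≤ N
  x : Fin (N + 1) → ℝ
  hx : StrictMono x
  f : ℝ → ℝ
  m : Fin N → ℝ
  c : Fin N → ℝ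
  haff : ∀ i : Fin N, ∀ t ∈ Set.Icc (x i.castSucc) (x i.succ), f t = m i * t + c i

/-- Left endpoint of the domain of the terrain. -/
def Terrain.a (T : Terrain) : ℝ := T.x 0

/-- Right endpoint of the domain of the terrain. -/
def Terrain.b (T : Terrain) : ℝ := T.x (Fin.last T.N)

/-- Visibility: the segment from terrain point `p` to guard `u` stays on or above
the terrain. -/
def Terrain.Vis (T : Terrain) (p u : ℝ × ℝ) : Prop :=
  ∀ q ∈ segment ℝ p u, q.1 ∈ Set.Icc T.a T.b → T.f q.1 ≤ q.2

/-- Full visibility of the `i`-th edge from the point `u`. -/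
def Terrain.EdgeVis (T : Terrain) (i : Fin T.N) (u : ℝ × ℝ) : Prop :=
  ∀ t ∈ Set.Icc (T.x i.castSucc) (T.x i.succ), T.Vis (t, T.f t) u

lemma cone (T : Terrain) (t h v w : ℝ) (hft : T.f t ≤ h)
    (hw : w ∈ Set.uIcc t v)
    (hvis : T.Vis (t, T.f t) (v, h)) : T.Vis (t, T.f t) (w, h) := by
  intro q hq hq1
  rw [segment_eq_image'] at hq
  obtain ⟨s, hs, rfl⟩ := hq
  obtain ⟨hs0, hs1⟩ := hs
  simp only [Prod.fst_add, Prod.snd_add, Prod.smul_fst, Prod.smul_snd, Prod.fst_sub,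
    Prod.snd_sub, smul_eq_mul]
  by_cases hvt : v = t
  · have hwt : w = t := by rw [hvt, Set.uIcc_self] at hw; simpa using hw
    rw [hwt]
    simp only [sub_self, mul_zero, add_zero]
    nlinarith
  · have hvt' : v - t ≠ 0 := sub_ne_zero.mpr hvt
    set r := (w - t) / (v - t) with hr
    have hbound : (0 ≤ w - t ∧ w - t ≤ v - t) ∨ (v - t ≤ w - t ∧ w - t ≤ 0) := by
      rcases Set.mem_uIcc.mp hw with ⟨h1, h2⟩ | ⟨h1, h2⟩
      · exact Or.inl ⟨by linarith, by linarith⟩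
      · exact Or.inr ⟨by linarith, by linarith⟩
    have hr0 : 0 ≤ r := by
      rw [hr, div_nonneg_iff]
      rcases hbound with ⟨h1, h2⟩ | ⟨h1, h2⟩
      · exact Or.inl ⟨h1, by linarith⟩
      · exact Or.inr ⟨by linarith, by linarith⟩
    have hr1 : r ≤ 1 := by
      rw [hr, div_le_one_iff]
      rcases hbound with ⟨h1, h2⟩ | ⟨h1, h2⟩
      · refine Or.inl ⟨lt_of_le_of_ne (by linarith) (Ne.symm hvt'), by linarith⟩
      · refine Or.inr (Or.inr ⟨lt_of_le_of_ne (by linarith) hvt', by linarith⟩)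
    have key : r * (v - t) = w - t := div_mul_cancel₀ _ hvt'
    have hmem : ((t, T.f t) + (s * r) • ((v, h) - (t, T.f t))) ∈ segment ℝ (t, T.f t) (v, h) := by
      rw [segment_eq_image']
      exact Set.mem_image_of_mem _ ⟨mul_nonneg hs0 hr0, by nlinarith⟩
    have hx1 : t + s * r * (v - t) = t + s * (w - t) := by
      rw [mul_assoc, key]
    have hfin := hvis _ hmem (by
      simp only [Prod.fst_add, Prod.smul_fst, Prod.fst_sub, smul_eq_mul]
      rw [hx1]
      simpa using hq1)
    simp only [Prod.fst_add, Prod.snd_add, Prod.smul_fst, Prod.smul_snd, Prod.fst_sub,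
      Prod.snd_sub, smul_eq_mul] at hfin
    rw [hx1] at hfin
    refine hfin.trans ?_
    nlinarith [mul_nonneg (mul_nonneg hs0 (by linarith : (0:ℝ) ≤ 1 - r))
      (by linarith : (0:ℝ) ≤ h - T.f t)]

lemma exists_edge (T : Terrain) {t : ℝ} (ht : t ∈ Set.Icc T.a T.b) :
    ∃ i : Fin T.N, t ∈ Set.Icc (T.x i.castSucc) (T.x i.succ) := by
  classical
  obtain ⟨ha, hb⟩ := ht
  set S := Finset.univ.filter (fun j : Fin (T.N + 1) => T.x j ≤ t) with hS
  have hS0 : (0 : Fin (T.N + 1)) ∈ S := by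
    simp only [hS, Finset.mem_filter, Finset.mem_univ, true_and]
    exact ha
  have hSne : S.Nonempty := ⟨0, hS0⟩
  set j := S.max' hSne with hj
  have hjle : T.x j ≤ t := (Finset.mem_filter.mp (S.max'_mem hSne)).2
  by_cases hlast : (j : ℕ) = T.N
  · have hNpos : 0 < T.N := T.hN
    refine ⟨⟨T.N - 1, Nat.sub_lt hNpos one_pos⟩, ?_, ?_⟩
    · have h1 : t = T.x (Fin.last T.N) := le_antisymm hb (by
        have h2 : j = Fin.last T.N := Fin.ext hlast
        rw [← h2]; exact hjle)
      rw [h1]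
      exact T.hx.monotone (by simp [Fin.le_def])
    · have h3 : (Fin.succ ⟨T.N - 1, Nat.sub_lt hNpos one_pos⟩ : Fin (T.N + 1)) = Fin.last T.N := by
        ext; simp [Fin.succ]; omega
      rw [h3]; exact hb
  · have hjlt : (j : ℕ) < T.N := lt_of_le_of_ne (Nat.lt_succ_iff.mp j.isLt) hlast
    refine ⟨⟨j, hjlt⟩, ?_, ?_⟩
    · have h4 : (Fin.castSucc ⟨(j : ℕ), hjlt⟩ : Fin (T.N + 1)) = j := by ext; simp
      rw [h4]; exact hjle
    · set j1 : Fin (T.N + 1) := ⟨(j : ℕ) + 1, by omega⟩ with hj1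
      have hnot : j1 ∉ S := by
        intro hmem
        have hle := S.le_max' j1 hmem
        rw [← hj] at hle
        simp only [Fin.le_def, hj1] at hle
        omega
      have hgt : ¬ T.x j1 ≤ t := by
        intro hc
        exact hnot (by simp only [hS, Finset.mem_filter, Finset.mem_univ, true_and]; exact hc)
      have hsucc : (Fin.succ ⟨(j : ℕ), hjlt⟩ : Fin (T.N + 1)) = j1 := by ext; simp [hj1]
      rw [hsucc]
      linarith [lt_of_not_ge hgt]

/-- For any point `u` on `L(h)` with `x(u) < x(f(h))`, the set of points of `T`
visible from `u` is contained in the set of points of `T` visible from `f(h)`. -/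
theorem stmt8 (T : Terrain) (h : ℝ)
    (hh : ∀ t ∈ Set.Icc T.a T.b, T.f t ≤ h)
    (F : Fin T.N → ℝ)
    (hFvis : ∀ i, T.EdgeVis i (F i, h))
    (hFmax : ∀ i, ∀ p : ℝ, T.EdgeVis i (p, h) → p ≤ F i)
    (fh : ℝ) (hfh₁ : ∀ i, fh ≤ F i) (hfh₂ : ∃ i, fh = F i)
    (u : ℝ) (hu : u < fh) :
    ∀ t ∈ Set.Icc T.a T.b, T.Vis (t, T.f t) (u, h) → T.Vis (t, T.f t) (fh, h) := by
  intro t ht hvisu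
  have hft : T.f t ≤ h := hh t ht
  rcases le_or_gt t fh with hcase | hcase
  · obtain ⟨i, hi⟩ := exists_edge T ht
    have hFi : T.Vis (t, T.f t) (F i, h) := hFvis i t hi
    refine cone T t h (F i) fh hft ?_ hFi
    exact Set.mem_uIcc.mpr (Or.inl ⟨hcase, hfh₁ i⟩)
  · refine cone T t h u fh hft ?_ hvisu
    exact Set.mem_uIcc.mpr (Or.inr ⟨hu.le, hcase.le⟩)
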